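/- Suppose f ∈ C²(ℝ^d) with ‖∇²f(x)‖ ≤ M for all x, 0 < α ≤ 1/M, f(0) = 0 and ∇f(0) = 0. Let σ > 0 and let x ∈ ℝ^d satisfy ‖∇f(x)‖ ≥ σ‖x‖. Then for every coordinate index i with |e_iᵀ ∇f(x)| ≥ (1/√d) ‖∇f(x)‖, it holds that f(x − α e_i ∂_i f(x)) ≤ (1 − ασ²/(Md)) f(x). -/

import Mathlib

open Filter Topology

noncomputable section

/-- The Hessian `∇²f(x)` of `f` at `x`, as a continuous linear map. -/
def hess (d : ℕ) (f : EuclideanSpace ℝ (Fin d) → ℝ) (x : EuclideanSpace ℝ (Fin d)) :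
    EuclideanSpace ℝ (Fin d) →L[ℝ] EuclideanSpace ℝ (Fin d) :=
  fderiv ℝ (gradient f) x

open RealInnerProductSpace Set in
/-- Descent lemma: if the Hessian is bounded by `M`, then
`f (a + v) ≤ f a + ⟪∇f(a), v⟫ + M/2 ‖v‖²`. -/
lemma rcgd_descent {d : ℕ} (f : EuclideanSpace ℝ (Fin d) → ℝ) (M : ℝ)
    (hf : ContDiff ℝ 2 f) (hM : ∀ x, ‖hess d f x‖ ≤ M)
    (a v : EuclideanSpace ℝ (Fin d)) :
    f (a + v) ≤ f a + ⟪gradient f a, v⟫ + M / 2 * ‖v‖ ^ 2 := by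
  have hM0 : 0 ≤ M := le_trans (norm_nonneg _) (hM a)
  have hfd : Differentiable ℝ f := hf.differentiable (by norm_num)
  have hgc : ContDiff ℝ 1 (gradient f) :=
    ((InnerProductSpace.toDual ℝ (EuclideanSpace ℝ (Fin d))).symm.contDiff).comp
      (hf.fderiv_right (by norm_num))
  have hgd : Differentiable ℝ (gradient f) := hgc.differentiable one_ne_zero
  have lip : LipschitzWith M.toNNReal (gradient f) := by
    apply lipschitzWith_of_nnnorm_fderiv_le hgd
    intro y
    rw [← NNReal.coe_le_coe, coe_nnnorm, Real.coe_toNNReal _ hM0]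
    exact hM y
  have liple : ∀ z w : EuclideanSpace ℝ (Fin d),
      ‖gradient f z - gradient f w‖ ≤ M * ‖z - w‖ := by
    intro z w
    have := lip.dist_le_mul z w
    rwa [dist_eq_norm, dist_eq_norm, Real.coe_toNNReal _ hM0] at this
  have hline : ∀ t : ℝ, HasDerivAt (fun t : ℝ => a + t • v) v t := by
    intro t
    simpa using ((hasDerivAt_id t).smul_const v).const_add a
  have hφ : ∀ t : ℝ, HasDerivAt (fun t => f (a + t • v)) ⟪gradient f (a + t • v), v⟫ t := by
    intro t
    have h1 := ((hfd (a + t • v)).hasGradientAt.hasFDerivAt).comp_hasDerivAt t (hline t)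
    rw [InnerProductSpace.toDual_apply_apply] at h1
    exact h1
  set ψ : ℝ → ℝ := fun t => f (a + t • v) - t * ⟪gradient f a, v⟫ - M / 2 * ‖v‖ ^ 2 * t ^ 2
    with hψdef
  have hψ' : ∀ t : ℝ, HasDerivAt ψ
      (⟪gradient f (a + t • v), v⟫ - ⟪gradient f a, v⟫ - M * ‖v‖ ^ 2 * t) t := by
    intro t
    have h1 := ((hφ t).sub (hasDerivAt_mul_const ⟪gradient f a, v⟫)).sub
      ((hasDerivAt_pow 2 t).const_mul (M / 2 * ‖v‖ ^ 2))
    refine h1.congr_deriv ?_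
    ring
  have hmono : ψ 1 ≤ ψ 0 := by
    have hdiff : ∀ t : ℝ, DifferentiableAt ℝ ψ t := fun t => (hψ' t).differentiableAt
    have hanti : AntitoneOn ψ (Icc (0:ℝ) 1) := by
      apply antitoneOn_of_deriv_nonpos (convex_Icc 0 1)
        (fun t _ => (hdiff t).continuousAt.continuousWithinAt)
        (fun t _ => (hdiff t).differentiableWithinAt)
      intro t ht
      rw [interior_Icc] at ht
      rw [(hψ' t).deriv]
      have key : ⟪gradient f (a + t • v) - gradient f a, v⟫ ≤ M * ‖v‖ ^ 2 * t := by
        calc ⟪gradient f (a + t • v) - gradient f a, v⟫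
            ≤ ‖gradient f (a + t • v) - gradient f a‖ * ‖v‖ := real_inner_le_norm _ _
          _ ≤ (M * ‖a + t • v - a‖) * ‖v‖ :=
              mul_le_mul_of_nonneg_right (liple (a + t • v) a) (norm_nonneg v)
          _ = M * ‖v‖ ^ 2 * t := by
              rw [add_sub_cancel_left, norm_smul, Real.norm_eq_abs, abs_of_pos ht.1]
              ring
      rw [inner_sub_left] at key
      linarith
    exact hanti (by constructor <;> norm_num) (by constructor <;> norm_num) zero_le_one
  simp only [hψdef, one_smul, zero_smul, add_zero, one_mul, one_pow, zero_mul, sub_zero,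
    mul_zero, zero_pow] at hmono
  linarith

open RealInnerProductSpace Set in
/-- Linear decrease of function values on a good step: if `‖∇f(x)‖ ≥ σ‖x‖` and the chosen
coordinate satisfies `|e_iᵀ∇f(x)| ≥ (1/√d)‖∇f(x)‖`, then
`f(x − α e_i ∂_i f(x)) ≤ (1 − ασ²/(Md)) f(x)`. -/
theorem rcgd_step_linear_decrease
    {d : ℕ} (hd : 1 ≤ d) (f : EuclideanSpace ℝ (Fin d) → ℝ) (M α : ℝ)
    (hf : ContDiff ℝ 2 f)
    (hM : ∀ x, ‖hess d f x‖ ≤ M)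
    (hα : 0 < α) (hα' : α ≤ 1 / M)
    (hf0 : f 0 = 0) (hcrit : gradient f 0 = 0)
    (σ : ℝ) (hσ : 0 < σ)
    (x : EuclideanSpace ℝ (Fin d)) (hx : σ * ‖x‖ ≤ ‖gradient f x‖)
    (i : Fin d) (hi : (1 / Real.sqrt d) * ‖gradient f x‖ ≤ |gradient f x i|) :
    f (x - (α * gradient f x i) • EuclideanSpace.single i (1 : ℝ)) ≤
      (1 - α * σ ^ 2 / (M * d)) * f x := by
  have hMpos : 0 < M := by
    by_contra h
    push_neg at h
    have : 1 / M ≤ 0 := one_div_nonpos.mpr h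
    linarith
  have hd' : (1:ℝ) ≤ (d:ℝ) := by exact_mod_cast hd
  have hdpos : (0:ℝ) < (d:ℝ) := by linarith
  set G := gradient f x with hG
  set gi := G i with hgi
  set v : EuclideanSpace ℝ (Fin d) := (-(α * gi)) • EuclideanSpace.single i (1:ℝ) with hv
  have hy : x - (α * gradient f x i) • EuclideanSpace.single i (1:ℝ) = x + v := by
    rw [hv, neg_smul, ← sub_eq_add_neg]
  rw [hy]
  have hinner : ⟪G, v⟫ = -(α * gi) * gi := by
    rw [hv, real_inner_smul_right]
    congr 1
    simpa using EuclideanSpace.inner_single_right (𝕜 := ℝ) i 1 G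
  have hnv : ‖v‖ ^ 2 = α ^ 2 * gi ^ 2 := by
    rw [hv, norm_smul, EuclideanSpace.norm_single, norm_one]
    rw [mul_one, Real.norm_eq_abs, ← abs_pow]
    rw [abs_of_nonneg (by positivity : (0:ℝ) ≤ (-(α * gi))^2)]
    ring
  have step1 : f (x + v) ≤ f x + (-(α * gi) * gi) + M / 2 * (α ^ 2 * gi ^ 2) := by
    have := rcgd_descent f M hf hM x v
    rwa [hinner, hnv] at this
  have step2 : f x ≤ M / 2 * ‖x‖ ^ 2 := by
    have := rcgd_descent f M hf hM 0 x
    simpa [hf0, hcrit] using this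
  have hgi2 : ‖G‖ ^ 2 ≤ (d:ℝ) * gi ^ 2 := by
    have h0 : (0:ℝ) ≤ 1 / Real.sqrt d * ‖G‖ := by positivity
    have h1 : (1 / Real.sqrt d * ‖G‖) ^ 2 ≤ |gi| ^ 2 := pow_le_pow_left₀ h0 hi 2
    rw [mul_pow, div_pow, one_pow, Real.sq_sqrt hdpos.le, sq_abs] at h1
    rw [div_mul_eq_mul_div, one_mul, div_le_iff₀ hdpos] at h1
    linarith [h1]
  have hG2 : σ ^ 2 * ‖x‖ ^ 2 ≤ ‖G‖ ^ 2 := by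
    have h0 : (0:ℝ) ≤ σ * ‖x‖ := by positivity
    have := pow_le_pow_left₀ h0 hx 2
    rw [mul_pow] at this
    exact this
  have hMα : α * M ≤ 1 := (le_div_iff₀ hMpos).mp hα'
  have key1 : f (x + v) ≤ f x - α / 2 * gi ^ 2 := by
    have h6 := mul_le_mul_of_nonneg_right hMα (mul_nonneg hα.le (sq_nonneg gi))
    rw [one_mul] at h6
    nlinarith [step1, h6]
  set c : ℝ := α * σ ^ 2 / (M * d) with hc
  have hc0 : 0 ≤ c := by positivity
  have key2 : c * f x ≤ α / 2 * gi ^ 2 := by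
    have h1 : c * f x ≤ c * (M / 2 * ‖x‖ ^ 2) := mul_le_mul_of_nonneg_left step2 hc0
    have h2 : c * (M / 2 * ‖x‖ ^ 2) = α * σ ^ 2 * ‖x‖ ^ 2 / (2 * d) := by
      rw [hc, div_mul_eq_mul_div, div_eq_div_iff (by positivity) (by positivity)]
      ring
    have h3 : α * σ ^ 2 * ‖x‖ ^ 2 ≤ α * ((d:ℝ) * gi ^ 2) := by
      have a1 := mul_le_mul_of_nonneg_left hG2 hα.le
      have a2 := mul_le_mul_of_nonneg_left hgi2 hα.le
      linarith [a1, a2]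
    have h4 : α * σ ^ 2 * ‖x‖ ^ 2 / (2 * d) ≤ α * ((d:ℝ) * gi ^ 2) / (2 * d) := by
      gcongr
    have h5 : α * ((d:ℝ) * gi ^ 2) / (2 * d) = α / 2 * gi ^ 2 := by
      field_simp
    calc c * f x ≤ c * (M / 2 * ‖x‖ ^ 2) := h1
      _ = α * σ ^ 2 * ‖x‖ ^ 2 / (2 * d) := h2
      _ ≤ α * ((d:ℝ) * gi ^ 2) / (2 * d) := h4
      _ = α / 2 * gi ^ 2 := h5
  have : (1 - α * σ ^ 2 / (M * ↑d)) * f x = f x - c * f x := by rw [hc]; ring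
  rw [this]
  linarith
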